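/- Let k : ℕ, m ≥ 1, and let L R : Fin k → MvPolynomial (Fin m) ℕ describe a system of k Diophantine equations in m unknowns. Then there exists a primitive recursive predicate ψ : ℕ → Bool such that: (a) the system has a solution (∃ x : Fin m → ℕ, ∀ i, MvPolynomial.eval x (L i) = MvPolynomial.eval x (R i)) if and only if ∃ n : ℕ, ψ n = false; equivalently (b) the system is unsolvable in natural numbers if and only if ψ n = true for all n : ℕ. -/

import Mathlib

lemma evalListPrimrec (m : ℕ) (p : MvPolynomial (Fin m) ℕ) :
    Primrec fun l : List ℕ => MvPolynomial.eval (fun j : Fin m => l.getD j 0) p := by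
  induction p using MvPolynomial.induction_on with
  | C a => simpa using Primrec.const (a : ℕ)
  | add p q hp hq =>
    simpa [map_add] using Primrec.nat_add.comp hp hq
  | mul_X p i hp =>
    have hg : Primrec fun l : List ℕ => l.getD (i : ℕ) 0 :=
      (Primrec.list_getD 0).comp .id (.const (i : ℕ))
    simpa [map_mul, MvPolynomial.eval_X] using Primrec.nat_mul.comp hp hg

lemma primrecPred_fin_forall {α : Type*} [Primcodable α] :
    ∀ {k : ℕ} (P : Fin k → α → Prop) [∀ i a, Decidable (P i a)],
      (∀ i, PrimrecPred (P i)) → PrimrecPred fun a => ∀ i, P i a := by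
  intro k
  induction k with
  | zero =>
    intro P _ _
    exact ⟨inferInstance, (Primrec.const true).of_eq fun a => by simp⟩
  | succ k ih =>
    intro P _ h
    have := ((h 0).and (ih (fun i => P i.succ) (fun i => h i.succ)))
    exact this.of_eq fun a => by simp [Fin.forall_fin_succ]

/-- every system of Diophantine equations in `m ≥ 1` unknowns has an
associated unary primitive recursive predicate `ψ` whose counterexamples
correspond exactly to the solutions of the system. -/
theorem diophantine_unary_predicate (k m : ℕ) (hm : 1 ≤ m)
    (L R : Fin k → MvPolynomial (Fin m) ℕ) :
    ∃ ψ : ℕ → Bool, Primrec ψ ∧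
      ((∃ x : Fin m → ℕ, ∀ i, MvPolynomial.eval x (L i) = MvPolynomial.eval x (R i)) ↔
        ∃ n : ℕ, ψ n = false) ∧
      ((¬ ∃ x : Fin m → ℕ, ∀ i, MvPolynomial.eval x (L i) = MvPolynomial.eval x (R i)) ↔
        ∀ n : ℕ, ψ n = true) := by
  classical
  -- decoding of a natural number into an assignment of the variables
  set dec : ℕ → (Fin m → ℕ) :=
    fun n j => (Denumerable.ofNat (List ℕ) n).getD j 0 with hdec
  have hsurj : ∀ x : Fin m → ℕ, ∃ n, dec n = x := by
    intro x
    refine ⟨Encodable.encode (List.ofFn x), ?_⟩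
    funext j
    simp [hdec, List.getD_eq_getElem?_getD, List.getElem?_ofFn, j.isLt]
  refine ⟨fun n => decide (¬ ∀ i, MvPolynomial.eval (dec n) (L i) =
      MvPolynomial.eval (dec n) (R i)), ?_, ?_, ?_⟩
  · have hpred : PrimrecPred fun l : List ℕ =>
        ∀ i, MvPolynomial.eval (fun j : Fin m => l.getD j 0) (L i) =
          MvPolynomial.eval (fun j : Fin m => l.getD j 0) (R i) := by
      apply primrecPred_fin_forall
      intro i
      exact Primrec.eq.comp (evalListPrimrec m (L i)) (evalListPrimrec m (R i))
    exact (hpred.not.comp (Primrec.ofNat (List ℕ))).decide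
  · constructor
    · rintro ⟨x, hx⟩
      obtain ⟨n, rfl⟩ := hsurj x
      exact ⟨n, by simpa using hx⟩
    · rintro ⟨n, hn⟩
      exact ⟨dec n, by simpa using hn⟩
  · constructor
    · intro h n
      simp only [decide_eq_true_eq]
      exact fun hs => h ⟨dec n, hs⟩
    · rintro h ⟨x, hx⟩
      obtain ⟨n, rfl⟩ := hsurj x
      have := h n
      simp only [decide_eq_true_eq] at this
      exact this hx
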